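/- Let α₁, α₂ ∈ ℂ[x] be polynomials with α₂ ≠ 0 and deg α₁ > deg α₂, and let a₁, a₂ ∈ ℂ(x) be nonzero rational functions whose ratio a₂/a₁ is a (nonzero) complex constant. Write a₁ = p/q in lowest terms with p, q ∈ ℂ[x], and set H(a₁) = max(deg p, deg q) and ν_∞(a₁) = deg q − deg p. If for some n ≥ 0, some integer m ≥ 2, and some polynomial h ∈ ℂ[x] with deg h ≥ 2 one has a₁·α₁ⁿ + a₂·α₂ⁿ = h^m in ℂ(x), then n ≤ (2 + deg α₁)·(3 + deg α₁)·(1 + deg α₁ + deg α₂ + 2·H(a₁)) + |ν_∞(a₁)|. -/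

import Mathlib

open Polynomial UniqueFactorizationMonoid UniqueFactorizationDomain

section AuxRadical

variable {M : Type*} [CommMonoidWithZero M] [IsCancelMulZero M] [NormalizationMonoid M]
  [UniqueFactorizationMonoid M]

theorem aux_mem_primeFactors {p b : M} (hb : b ≠ 0) (hp : Prime p)
    (hn : normalize p = p) (hdvd : p ∣ b) : p ∈ primeFactors b := by
  classical
  obtain ⟨q, hq, hassoc⟩ := exists_mem_normalizedFactors_of_dvd hb hp.irreducible hdvd
  have hpq : p = q := by
    have h2 := normalize_eq_normalize hassoc.dvd hassoc.symm.dvd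
    rwa [hn, normalize_normalized_factor q hq] at h2
  rw [primeFactors, Multiset.mem_toFinset, hpq]
  exact hq

theorem aux_radical_dvd_radical {a b : M} (hb : b ≠ 0) (h : a ∣ b) :
    radical a ∣ radical b := by
  classical
  apply Finset.prod_dvd_prod_of_subset
  intro p hp
  rw [primeFactors, Multiset.mem_toFinset] at hp
  exact aux_mem_primeFactors hb (prime_of_normalized_factor p hp)
    (normalize_normalized_factor p hp) ((dvd_of_mem_normalizedFactors hp).trans h)

theorem aux_radical_mul_dvd {a b : M} (ha : a ≠ 0) (hb : b ≠ 0) :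
    radical (a * b) ∣ radical a * radical b := by
  classical
  have hsub : primeFactors (a * b) ⊆ primeFactors a ∪ primeFactors b := by
    intro p hp
    rw [primeFactors, Multiset.mem_toFinset] at hp
    have hprime := prime_of_normalized_factor p hp
    have hnorm := normalize_normalized_factor p hp
    rcases hprime.dvd_or_dvd (dvd_of_mem_normalizedFactors hp) with h' | h'
    · exact Finset.mem_union_left _ (aux_mem_primeFactors ha hprime hnorm h')
    · exact Finset.mem_union_right _ (aux_mem_primeFactors hb hprime hnorm h')
  calc radical (a * b) ∣ (primeFactors a ∪ primeFactors b).prod id :=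
        Finset.prod_dvd_prod_of_subset _ _ id hsub
    _ ∣ radical a * radical b :=
        ⟨(primeFactors a ∩ primeFactors b).prod id,
          (Finset.prod_union_inter (f := id)).symm⟩

end AuxRadical

theorem aux_gcd_pow_dvd {R : Type*} [CommMonoidWithZero R] [IsCancelMulZero R] [NormalizedGCDMonoid R]
    (a b : R) (m : ℕ) : gcd a (b ^ m) ∣ gcd a b ^ m := by
  induction m with
  | zero => simpa using gcd_dvd_right a 1
  | succ k ih =>
    calc gcd a (b ^ (k + 1)) = gcd a (b * b ^ k) := by rw [pow_succ']
      _ ∣ gcd a b * gcd a (b ^ k) := gcd_mul_dvd_mul_gcd a b (b ^ k)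
      _ ∣ gcd a b * gcd a b ^ k := mul_dvd_mul_left _ ih
      _ = gcd a b ^ (k + 1) := (pow_succ' _ _).symm

set_option maxHeartbeats 1000000 in
/-- **Explicit index bound in the binary case.**
With `a₁` written in lowest terms as `a₁.num / a₁.denom` (this is the reduced representation
provided by `RatFunc`), the height is `H(a₁) = max (deg num) (deg denom)` and
`ν_∞(a₁) = deg denom − deg num = −intDegree a₁`.  If `a₁·α₁^n + a₂·α₂^n = h^m` for some
`m ≥ 2` and `deg h ≥ 2`, then
`n ≤ (2 + deg α₁)(3 + deg α₁)(1 + deg α₁ + deg α₂ + 2·H(a₁)) + |ν_∞(a₁)|`. -/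
theorem stmt2 (α₁ α₂ : Polynomial ℂ) (hα₂ : α₂ ≠ 0)
    (hdeg : α₂.natDegree < α₁.natDegree)
    (a₁ a₂ : RatFunc ℂ) (ha₁ : a₁ ≠ 0) (ha₂ : a₂ ≠ 0)
    (c : ℂ) (hc : c ≠ 0) (hratio : a₂ / a₁ = RatFunc.C c)
    (n m : ℕ) (hm : 2 ≤ m) (h : Polynomial ℂ) (hh : 2 ≤ h.natDegree)
    (heq : a₁ * (algebraMap (Polynomial ℂ) (RatFunc ℂ) α₁) ^ n +
        a₂ * (algebraMap (Polynomial ℂ) (RatFunc ℂ) α₂) ^ n =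
      (algebraMap (Polynomial ℂ) (RatFunc ℂ) h) ^ m) :
    n ≤ (2 + α₁.natDegree) * (3 + α₁.natDegree) *
          (1 + α₁.natDegree + α₂.natDegree +
            2 * max a₁.num.natDegree a₁.denom.natDegree)
        + a₁.intDegree.natAbs := by
  classical
  rcases Nat.eq_zero_or_pos n with rfl | hn
  · exact Nat.zero_le _
  set p := a₁.num with hpdef
  set q := a₁.denom with hqdef
  have hqne : q ≠ 0 := a₁.denom_ne_zero
  have hpne : p ≠ 0 := RatFunc.num_ne_zero ha₁
  have hα₁ : α₁ ≠ 0 := by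
    intro h0
    rw [h0, natDegree_zero] at hdeg
    omega
  have hhne : h ≠ 0 := by
    intro h0
    rw [h0, natDegree_zero] at hh
    omega
  have hmpos : 0 < m := by omega
  have ha₂eq : a₂ = RatFunc.C c * a₁ := by
    rw [← hratio, div_mul_cancel₀ _ ha₁]
  -- the polynomial identity
  have hqRne : (algebraMap (Polynomial ℂ) (RatFunc ℂ)) q ≠ 0 := RatFunc.algebraMap_ne_zero hqne
  have hpq : (algebraMap (Polynomial ℂ) (RatFunc ℂ)) p = a₁ * algebraMap _ _ q := by
    conv_rhs => rw [← RatFunc.num_div_denom a₁]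
    rw [div_mul_cancel₀ _ hqRne]
  rw [ha₂eq] at heq
  have key : p * α₁ ^ n + Polynomial.C c * (p * α₂ ^ n) = q * h ^ m := by
    apply RatFunc.algebraMap_injective ℂ
    simp only [map_add, map_mul, map_pow, RatFunc.algebraMap_C, hpq]
    rw [← heq]
    ring
  -- gcd decomposition
  set e := gcd α₁ α₂ with hedef
  have hene : e ≠ 0 := by
    intro h0
    exact hα₁ ((gcd_eq_zero_iff α₁ α₂).1 h0).1
  obtain ⟨β₁, hβ₁⟩ : e ∣ α₁ := gcd_dvd_left α₁ α₂
  obtain ⟨β₂, hβ₂⟩ : e ∣ α₂ := gcd_dvd_right α₁ α₂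
  have hβ₁ne : β₁ ≠ 0 := by rintro rfl; rw [mul_zero] at hβ₁; exact hα₁ hβ₁
  have hβ₂ne : β₂ ≠ 0 := by rintro rfl; rw [mul_zero] at hβ₂; exact hα₂ hβ₂
  have hcop : IsCoprime β₁ β₂ := by
    rw [← gcd_isUnit_iff]
    have h1 : gcd α₁ α₂ = normalize e * gcd β₁ β₂ := by
      conv_lhs => rw [hβ₁, hβ₂]
      exact gcd_mul_left e β₁ β₂
    rw [← hedef, normalize_gcd] at h1
    have h2 : e * 1 = e * gcd β₁ β₂ := by
      rw [mul_one]
      exact h1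
    rw [← mul_left_cancel₀ hene h2]
    exact isUnit_one
  -- degrees
  have hd1 : α₁.natDegree = e.natDegree + β₁.natDegree := by
    rw [hβ₁, natDegree_mul hene hβ₁ne]
  have hd2 : α₂.natDegree = e.natDegree + β₂.natDegree := by
    rw [hβ₂, natDegree_mul hene hβ₂ne]
  have hee_le : e.natDegree ≤ α₂.natDegree := natDegree_le_of_dvd ⟨β₂, hβ₂⟩ hα₂
  have hb₁pos : 1 ≤ β₁.natDegree := by omega
  -- rewritten key equation
  set γ := β₁ ^ n + Polynomial.C c * β₂ ^ n with hγdef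
  have keyE : p * e ^ n * γ = q * h ^ m := by
    rw [← key, hγdef, hβ₁, hβ₂]
    ring
  have hqhne : q * h ^ m ≠ 0 := mul_ne_zero hqne (pow_ne_zero _ hhne)
  have hγne : γ ≠ 0 := by
    rintro h0
    rw [h0, mul_zero] at keyE
    exact hqhne keyE.symm
  -- degree identity
  have hCcne : Polynomial.C c ≠ 0 := Polynomial.C_ne_zero.2 hc
  have hlhs : (p * α₁ ^ n + Polynomial.C c * (p * α₂ ^ n)).natDegree
      = p.natDegree + n * α₁.natDegree := by
    rw [natDegree_add_eq_left_of_natDegree_lt, natDegree_mul hpne (pow_ne_zero _ hα₁),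
      natDegree_pow]
    rw [natDegree_mul hCcne (mul_ne_zero hpne (pow_ne_zero _ hα₂)),
      natDegree_mul hpne (pow_ne_zero _ hα₂),
      natDegree_mul hpne (pow_ne_zero _ hα₁), natDegree_pow, natDegree_pow, natDegree_C]
    have : n * α₂.natDegree < n * α₁.natDegree := by
      exact mul_lt_mul_of_pos_left hdeg hn
    omega
  have hD : p.natDegree + n * α₁.natDegree = q.natDegree + m * h.natDegree := by
    rw [← hlhs, key, natDegree_mul hqne (pow_ne_zero _ hhne), natDegree_pow]
  -- the e-part of h
  set gE := gcd (e ^ n) h with hgEdef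
  have hgEne : gE ≠ 0 := by
    intro h0
    exact hhne ((gcd_eq_zero_iff _ _).1 h0).2
  obtain ⟨h'', hh''⟩ : gE ∣ h := gcd_dvd_right _ _
  have hh''ne : h'' ≠ 0 := by rintro rfl; rw [mul_zero] at hh''; exact hhne hh''
  have ineq1 : n * e.natDegree ≤ q.natDegree + m * gE.natDegree := by
    have hdvd1 : e ^ n ∣ gcd (e ^ n) q * gE ^ m := by
      have h1 : e ^ n ∣ q * h ^ m := ⟨p * γ, by rw [← keyE]; ring⟩
      have h2 : e ^ n ∣ gcd (e ^ n) (q * h ^ m) := dvd_gcd dvd_rfl h1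
      exact h2.trans ((gcd_mul_dvd_mul_gcd _ _ _).trans
        (mul_dvd_mul_left _ (aux_gcd_pow_dvd _ _ _)))
    have hgqne : gcd (e ^ n) q ≠ 0 := by
      intro h0
      exact hqne ((gcd_eq_zero_iff _ _).1 h0).2
    have hne2 : gcd (e ^ n) q * gE ^ m ≠ 0 := mul_ne_zero hgqne (pow_ne_zero _ hgEne)
    have h3 := Polynomial.natDegree_le_of_dvd hdvd1 hne2
    rw [natDegree_pow, natDegree_mul hgqne (pow_ne_zero _ hgEne), natDegree_pow] at h3
    have h4 : (gcd (e ^ n) q).natDegree ≤ q.natDegree :=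
      natDegree_le_of_dvd (gcd_dvd_right _ _) hqne
    omega
  -- Mason-Stothers
  have hab : IsCoprime (β₁ ^ n) (Polynomial.C c * β₂ ^ n) := by
    have hunit : IsCoprime (β₁ ^ n) (Polynomial.C c) :=
      ⟨0, Polynomial.C c⁻¹, by
        rw [zero_mul, zero_add, ← Polynomial.C_mul, inv_mul_cancel₀ hc, Polynomial.C_1]⟩
    exact hunit.mul_right hcop.pow
  have hγ1 : IsCoprime (β₁ ^ n) γ := by
    have h1 := hab.add_mul_left_right 1
    rw [mul_one] at h1
    rwa [hγdef, add_comm]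
  have hγ2 : IsCoprime (Polynomial.C c * β₂ ^ n) γ := by
    have h1 := hab.symm.add_mul_left_right 1
    rw [mul_one] at h1
    rwa [hγdef]
  have habc : β₁ ^ n + Polynomial.C c * β₂ ^ n + (-γ) = 0 := by
    rw [hγdef]; ring
  have hβ₁pne : β₁ ^ n ≠ 0 := pow_ne_zero _ hβ₁ne
  have hbne : Polynomial.C c * β₂ ^ n ≠ 0 := mul_ne_zero hCcne (pow_ne_zero _ hβ₂ne)
  have hnγne : -γ ≠ 0 := neg_ne_zero.2 hγne
  rcases Polynomial.abc hβ₁pne hbne hnγne hab habc with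
    ⟨H1, _, _⟩ | ⟨d1, _, _⟩
  swap
  · exfalso
    have := natDegree_eq_zero_of_derivative_eq_zero d1
    rw [natDegree_pow] at this
    have : 1 ≤ n * β₁.natDegree := Nat.mul_le_mul hn hb₁pos
    omega
  -- bound the radical
  have hradne : (radical e : Polynomial ℂ) ≠ 0 := radical_ne_zero (a := e)
  have hd : radical (β₁ ^ n * (Polynomial.C c * β₂ ^ n) * (-γ))
      ∣ β₁ * β₂ * (q * (radical e * h'')) := by
    have r1 : radical (β₁ ^ n) ∣ β₁ := by
      rw [radical_pow _ hn.ne']; exact radical_dvd_self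
    have rassoc : Associated (β₂ ^ n) (Polynomial.C c * β₂ ^ n) := by
      have hu : IsUnit (Polynomial.C c) := Polynomial.isUnit_C.2 (isUnit_iff_ne_zero.2 hc)
      exact ⟨hu.unit, by rw [IsUnit.unit_spec, mul_comm]⟩
    have r2 : radical (Polynomial.C c * β₂ ^ n) ∣ β₂ := by
      rw [← radical_eq_of_associated rassoc, radical_pow _ hn.ne']
      exact radical_dvd_self
    have r3 : radical (-γ) ∣ q * (radical e * h'') := by
      rw [radical_neg]
      have hγdvd : γ ∣ q * h ^ m := ⟨p * e ^ n, by rw [← keyE]; ring⟩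
      have rh : radical h ∣ radical e * h'' := by
        calc radical h = radical (gE * h'') := by rw [← hh'']
          _ ∣ radical gE * radical h'' := aux_radical_mul_dvd hgEne hh''ne
          _ ∣ radical e * h'' := by
              apply mul_dvd_mul
              · have := aux_radical_dvd_radical (pow_ne_zero n hene) (gcd_dvd_left (e ^ n) h)
                rwa [radical_pow _ hn.ne'] at this
              · exact radical_dvd_self
      calc radical γ ∣ radical (q * h ^ m) := aux_radical_dvd_radical hqhne hγdvd
        _ ∣ radical q * radical (h ^ m) := aux_radical_mul_dvd hqne (pow_ne_zero _ hhne)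
        _ = radical q * radical h := by rw [radical_pow _ hmpos.ne']
        _ ∣ q * (radical e * h'') := mul_dvd_mul (radical_dvd_self (a := q)) rh
    calc radical (β₁ ^ n * (Polynomial.C c * β₂ ^ n) * (-γ))
        ∣ radical (β₁ ^ n * (Polynomial.C c * β₂ ^ n)) * radical (-γ) :=
          aux_radical_mul_dvd (mul_ne_zero hβ₁pne hbne) hnγne
      _ ∣ radical (β₁ ^ n) * radical (Polynomial.C c * β₂ ^ n) * radical (-γ) :=
          mul_dvd_mul (aux_radical_mul_dvd hβ₁pne hbne) dvd_rfl
      _ ∣ β₁ * β₂ * (q * (radical e * h'')) := mul_dvd_mul (mul_dvd_mul r1 r2) r3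
  have hne' : β₁ * β₂ * (q * (radical e * h'')) ≠ 0 :=
    mul_ne_zero (mul_ne_zero hβ₁ne hβ₂ne) (mul_ne_zero hqne (mul_ne_zero hradne hh''ne))
  have hdegprod : (β₁ * β₂ * (q * (radical e * h''))).natDegree
      = β₁.natDegree + β₂.natDegree
        + (q.natDegree + (radical e).natDegree + h''.natDegree) := by
    rw [natDegree_mul (mul_ne_zero hβ₁ne hβ₂ne) (mul_ne_zero hqne (mul_ne_zero hradne hh''ne)),
      natDegree_mul hβ₁ne hβ₂ne, natDegree_mul hqne (mul_ne_zero hradne hh''ne),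
      natDegree_mul hradne hh''ne]
    ring
  have hstar : n * β₁.natDegree + 1
      ≤ β₁.natDegree + β₂.natDegree
        + (q.natDegree + (radical e).natDegree + h''.natDegree) := by
    rw [natDegree_pow] at H1
    exact H1.trans ((Polynomial.natDegree_le_of_dvd hd hne').trans_eq hdegprod)
  -- final arithmetic
  have hre : (radical e).natDegree ≤ e.natDegree :=
    natDegree_le_of_dvd (radical_dvd_self (a := e)) hene
  have hdh : h.natDegree = gE.natDegree + h''.natDegree := by
    rw [hh'', natDegree_mul hgEne hh''ne]
  obtain ⟨m', rfl⟩ : ∃ m', m = m' + 2 := ⟨m - 2, by omega⟩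
  -- step1 : (m'+2) * h''.natDegree ≤ p.natDegree + n * β₁.natDegree
  have hsplitD : n * α₁.natDegree = n * e.natDegree + n * β₁.natDegree := by
    rw [hd1, Nat.mul_add]
  have hsplitH : (m' + 2) * h.natDegree
      = (m' + 2) * gE.natDegree + (m' + 2) * h''.natDegree := by
    rw [hdh, Nat.mul_add]
  have step1 : (m' + 2) * h''.natDegree ≤ p.natDegree + n * β₁.natDegree := by omega
  set T := β₁.natDegree + β₂.natDegree + (q.natDegree + (radical e).natDegree) with hTdef
  have e1 : (m' + 2) * (n * β₁.natDegree + 1) ≤ (m' + 2) * (T + h''.natDegree) := by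
    apply Nat.mul_le_mul_left
    omega
  have e2 : (m' + 2) * (T + h''.natDegree) = (m' + 2) * T + (m' + 2) * h''.natDegree :=
    Nat.mul_add _ _ _
  have e3 : (m' + 2) * (n * β₁.natDegree + 1)
      = (m' + 1) * (n * β₁.natDegree) + n * β₁.natDegree + (m' + 2) := by ring
  have e4 : (m' + 1) * (n * β₁.natDegree) ≤ (m' + 2) * T + p.natDegree := by omega
  have e5 : (m' + 1) * n ≤ (m' + 1) * (n * β₁.natDegree) := by
    apply Nat.mul_le_mul_left
    calc n = n * 1 := (Nat.mul_one n).symm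
      _ ≤ n * β₁.natDegree := Nat.mul_le_mul_left n hb₁pos
  have e6 : (m' + 2) * T + p.natDegree ≤ (m' + 1) * (2 * T + p.natDegree) := by
    have : (m' + 1) * (2 * T + p.natDegree)
        = (m' + 2) * T + (m' * T + m' * p.natDegree + p.natDegree) := by ring
    omega
  have e7 : n ≤ 2 * T + p.natDegree := by
    have := le_trans (le_trans e5 e4) e6
    exact Nat.le_of_mul_le_mul_left this (by omega)
  -- conclude
  set H := max p.natDegree q.natDegree with hHdef
  have hpH : p.natDegree ≤ H := le_max_left _ _
  have hqH : q.natDegree ≤ H := le_max_right _ _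
  have hb1le : β₁.natDegree ≤ α₁.natDegree := by omega
  have hb2le : β₂.natDegree ≤ α₂.natDegree := by omega
  have h6 : 6 * (1 + α₁.natDegree + α₂.natDegree + 2 * H)
      ≤ (2 + α₁.natDegree) * (3 + α₁.natDegree) * (1 + α₁.natDegree + α₂.natDegree + 2 * H) := by
    apply Nat.mul_le_mul_right
    nlinarith
  have hfin : n ≤ 6 * (1 + α₁.natDegree + α₂.natDegree + 2 * H) := by omega
  exact hfin.trans (h6.trans (Nat.le_add_right _ _))
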